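/- Let g : ℝ → ℝ be convex and differentiable on all of ℝ, let X ~ N(0,1), assume E[|g(X)|·(X²+1)] < ∞, and let h : ℝ → ℝ be measurable such that for Lebesgue-almost every x ∈ ℝ, the derivative g′ is differentiable at x with derivative h(x). Then E[h(X)] ≤ E[X·g′(X)] = E[g(X)·(X²−1)], where E[h(X)] is well-defined in [0,∞] since h ≥ 0 almost everywhere (g′ being monotone increasing). -/

import Mathlib

open MeasureTheory ProbabilityTheory Real Filter Set

local notation "φ" => gaussianPDFReal 0 1

lemma phi_eq (x : ℝ) : φ x = (Real.sqrt (2*π))⁻¹ * Real.exp (-(x^2/2)) := by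
  rw [gaussianPDFReal]
  norm_num
  left; ring

lemma continuous_phi : Continuous φ := by
  simp only [gaussianPDFReal_def]
  fun_prop

lemma phi_nonneg (x : ℝ) : 0 ≤ φ x := gaussianPDFReal_nonneg 0 1 x

lemma hasDerivAt_phi (x : ℝ) : HasDerivAt φ (-(x * φ x)) x := by
  have h1 : HasDerivAt (fun x : ℝ => -(x^2/2)) (-x) x := by
    have := ((hasDerivAt_pow 2 x).div_const 2).neg
    exact this.congr_deriv (by norm_num)
  have h2 := (h1.exp).const_mul ((Real.sqrt (2*π))⁻¹)
  have he : (fun x : ℝ => (Real.sqrt (2*π))⁻¹ * Real.exp (-(x^2/2))) = φ := by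
    ext y; rw [phi_eq]
  rw [he] at h2
  refine h2.congr_deriv ?_
  rw [phi_eq]; ring

lemma neg_sq_tendsto : Tendsto (fun x : ℝ => -(x^2/2)) atTop atBot := by
  apply tendsto_neg_atTop_atBot.comp
  exact (tendsto_pow_atTop (by norm_num : 2 ≠ 0)).atTop_div_const (by norm_num)

lemma tendsto_phi_atTop : Tendsto φ atTop (nhds 0) := by
  have h := (Real.tendsto_exp_atBot.comp neg_sq_tendsto).const_mul ((Real.sqrt (2*π))⁻¹)
  simp only [mul_zero] at h
  refine h.congr (fun x => ?_)
  rw [phi_eq]; rfl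

lemma tendsto_phi_atBot : Tendsto φ atBot (nhds 0) := by
  have h := tendsto_phi_atTop.comp tendsto_neg_atBot_atTop
  refine h.congr (fun x => ?_)
  simp only [Function.comp]
  rw [phi_eq, phi_eq, neg_pow]
  norm_num

lemma integrable_phi : Integrable φ := integrable_gaussianPDFReal 0 1

lemma integrable_mul_phi : Integrable (fun x : ℝ => x * φ x) := by
  have h := integrable_mul_exp_neg_mul_sq (by norm_num : (0:ℝ) < 1/2)
  have := h.const_mul ((Real.sqrt (2*π))⁻¹)
  refine this.congr' ?_ (Eventually.of_forall fun x => ?_)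
  · exact (continuous_id.mul continuous_phi).aestronglyMeasurable
  · rw [phi_eq]; ring_nf

lemma integrable_abs_mul_phi : Integrable (fun x : ℝ => |x| * φ x) := by
  have := integrable_mul_phi.abs
  refine this.congr (Eventually.of_forall fun x => ?_)
  show |x * φ x| = |x| * φ x
  rw [abs_mul, abs_of_nonneg (phi_nonneg x)]

variable {g g' : ℝ → ℝ}


lemma mono_g' (hconv : ConvexOn ℝ Set.univ g) (hg' : ∀ x, HasDerivAt g (g' x) x) :
    Monotone g' := by
  have h := hconv.monotoneOn_deriv (fun x _ => (hg' x).differentiableAt)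
  intro a b hab
  have := h (mem_univ a) (mem_univ b) hab
  rwa [(hg' a).deriv, (hg' b).deriv] at this

lemma cont_g' (hconv : ConvexOn ℝ Set.univ g) (hg' : ∀ x, HasDerivAt g (g' x) x) :
    Continuous g' := by
  have hm := mono_g' hconv hg'
  rw [continuous_iff_continuousAt]
  intro x
  rw [hm.continuousAt_iff_leftLim_eq_rightLim]
  have hslope : Tendsto (slope g x) (nhdsWithin x {x}ᶜ) (nhds (g' x)) :=
    hasDerivAt_iff_tendsto_slope.mp (hg' x)
  have hr : Function.rightLim g' x ≤ g' x := by
    have hsl : Tendsto (slope g x) (nhdsWithin x (Ioi x)) (nhds (g' x)) :=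
      hslope.mono_left (nhdsWithin_mono x (fun t ht => ne_of_gt ht))
    refine ge_of_tendsto hsl ?_
    filter_upwards [self_mem_nhdsWithin] with t ht
    obtain ⟨c, hc, hceq⟩ := exists_hasDerivAt_eq_slope g g' ht
      (fun y _ => (hg' y).continuousAt.continuousWithinAt) (fun y _ => hg' y)
    rw [slope_def_field, ← hceq]
    exact hm.rightLim_le hc.1
  have hl : g' x ≤ Function.leftLim g' x := by
    have hsl : Tendsto (slope g x) (nhdsWithin x (Iio x)) (nhds (g' x)) :=
      hslope.mono_left (nhdsWithin_mono x (fun t ht => ne_of_lt ht))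
    refine le_of_tendsto hsl ?_
    filter_upwards [self_mem_nhdsWithin] with t ht
    obtain ⟨c, hc, hceq⟩ := exists_hasDerivAt_eq_slope g g' ht
      (fun y _ => (hg' y).continuousAt.continuousWithinAt) (fun y _ => hg' y)
    rw [slope_comm, slope_def_field, ← hceq]
    exact hm.le_leftLim hc.2
  have h1 : Function.leftLim g' x ≤ g' x := hm.leftLim_le le_rfl
  have h2 : g' x ≤ Function.rightLim g' x := hm.le_rightLim le_rfl
  exact le_antisymm (h1.trans h2) (hr.trans hl)

lemma hasDerivAt_F (hg' : ∀ x, HasDerivAt g (g' x) x) (x : ℝ) :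
    HasDerivAt (fun x => g x * (x * φ x)) ((x * g' x - g x * (x^2 - 1)) * φ x) x := by
  have h1 : HasDerivAt (fun x : ℝ => x * φ x) (1 * φ x + x * (-(x * φ x))) x :=
    (hasDerivAt_id x).mul (hasDerivAt_phi x)
  have h2 := (hg' x).mul h1
  exact h2.congr_deriv (by ring)

lemma aux_not_integrable {G : ℝ → ℝ} (hG : Integrable G (volume : Measure ℝ)) {ε : ℝ}
    {s : Set ℝ} (hsm : MeasurableSet s) (hs : volume s = ⊤)
    (hε : 0 < ε) (hbd : ∀ x ∈ s, ε ≤ G x) : False := by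
  have h1 : ∫⁻ x in s, ENNReal.ofReal ε ∂volume ≤ ∫⁻ x in s, (‖G x‖₊ : ENNReal) ∂volume := by
    refine lintegral_mono_ae ?_
    filter_upwards [ae_restrict_mem hsm] with x hx
    rw [← enorm_eq_nnnorm, Real.enorm_eq_ofReal_abs]
    exact ENNReal.ofReal_le_ofReal ((hbd x hx).trans (le_abs_self _))
  rw [setLIntegral_const, hs, ENNReal.mul_top (ENNReal.ofReal_pos.mpr hε).ne'] at h1
  have h2 : ∫⁻ x in s, (‖G x‖₊ : ENNReal) ∂volume ≤ ∫⁻ x, (‖G x‖₊ : ENNReal) ∂volume :=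
    setLIntegral_le_lintegral _ _
  have h3 : (∫⁻ x, (‖G x‖₊ : ENNReal) ∂volume) < ⊤ := hG.2
  exact absurd ((h1.trans h2).trans_lt h3) (lt_irrefl _)

lemma exists_small_right {G : ℝ → ℝ} (hG : Integrable G (volume : Measure ℝ)) (a : ℝ) :
    ∃ b, a < b ∧ G b ≤ 1 := by
  by_contra hcon
  push_neg at hcon
  exact aux_not_integrable hG measurableSet_Ioi Real.volume_Ioi one_pos
    (fun x hx => (hcon x hx).le)

lemma exists_small_left {G : ℝ → ℝ} (hG : Integrable G (volume : Measure ℝ)) (a : ℝ) :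
    ∃ b, b < a ∧ G b ≤ 1 := by
  by_contra hcon
  push_neg at hcon
  exact aux_not_integrable hG measurableSet_Iio (Real.volume_Iio (a := a)) one_pos
    (fun x hx => (hcon x hx).le)

lemma integrable_gaussian_iff {f : ℝ → ℝ} :
    Integrable f (gaussianReal 0 1) ↔ Integrable (fun x => f x * φ x) (volume : Measure ℝ) := by
  rw [gaussianReal_of_var_ne_zero 0 one_ne_zero, gaussianPDF_def,
    integrable_withDensity_iff ((measurable_gaussianPDFReal 0 1).ennreal_ofReal)
      (Eventually.of_forall fun x => ENNReal.ofReal_lt_top)]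
  have : (fun x => f x * (ENNReal.ofReal (φ x)).toReal) = fun x => f x * φ x := by
    ext x; rw [ENNReal.toReal_ofReal (phi_nonneg x)]
  rw [this]

lemma integral_gaussian_eq (f : ℝ → ℝ) :
    ∫ x, f x ∂(gaussianReal 0 1) = ∫ x, f x * φ x ∂(volume : Measure ℝ) := by
  rw [gaussianReal_of_var_ne_zero 0 one_ne_zero]
  have hmeas : Measurable (fun x => (φ x).toNNReal) :=
    (measurable_gaussianPDFReal 0 1).real_toNNReal
  have heq : gaussianPDF 0 1 = fun x => ((φ x).toNNReal : ENNReal) := rfl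
  rw [gaussianPDF_def] at heq ⊢
  rw [heq, integral_withDensity_eq_integral_smul hmeas]
  congr 1
  ext x
  rw [NNReal.smul_def, smul_eq_mul, Real.coe_toNNReal _ (phi_nonneg x), mul_comm]

lemma cont_g (hg' : ∀ x, HasDerivAt g (g' x) x) : Continuous g :=
  continuous_iff_continuousAt.mpr (fun x => (hg' x).continuousAt)

lemma cont_D (hconv : ConvexOn ℝ Set.univ g) (hg' : ∀ x, HasDerivAt g (g' x) x) :
    Continuous (fun x => (x * g' x - g x * (x^2 - 1)) * φ x) :=
  (((continuous_id.mul (cont_g' hconv hg')).sub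
    ((cont_g hg').mul ((continuous_pow 2).sub continuous_const))).mul continuous_phi)

lemma cont_f (hconv : ConvexOn ℝ Set.univ g) (hg' : ∀ x, HasDerivAt g (g' x) x) :
    Continuous (fun x => x * g' x * φ x) :=
  ((continuous_id.mul (cont_g' hconv hg')).mul continuous_phi)

lemma cont_G (hg' : ∀ x, HasDerivAt g (g' x) x) :
    Continuous (fun x => |g x| * (x^2 + 1) * φ x) :=
  (((cont_g hg').abs.mul ((continuous_pow 2).add continuous_const)).mul continuous_phi)

lemma ftc_ident (hconv : ConvexOn ℝ Set.univ g) (hg' : ∀ x, HasDerivAt g (g' x) x)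
    (a b : ℝ) :
    ∫ x in a..b, ((x * g' x - g x * (x^2 - 1)) * φ x) =
      g b * (b * φ b) - g a * (a * φ a) :=
  intervalIntegral.integral_eq_sub_of_hasDerivAt (fun x _ => hasDerivAt_F hg' x)
    ((cont_D hconv hg').intervalIntegrable a b)

lemma abs_point_bound (x : ℝ) : |g x * (x * φ x)| ≤ |g x| * (x^2 + 1) * φ x := by
  rw [abs_mul, abs_mul, abs_of_nonneg (phi_nonneg x)]
  have h1 : |x| ≤ x^2 + 1 := by nlinarith [abs_nonneg x, sq_abs x]
  have := mul_le_mul_of_nonneg_left (mul_le_mul_of_nonneg_right h1 (phi_nonneg x))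
    (abs_nonneg (g x))
  calc |g x| * (|x| * φ x) ≤ |g x| * ((x^2+1) * φ x) := this
    _ = |g x| * (x^2 + 1) * φ x := by ring

lemma abs_g_bound (x : ℝ) : |g x * (x^2 - 1) * φ x| ≤ |g x| * (x^2 + 1) * φ x := by
  rw [abs_mul, abs_mul, abs_of_nonneg (phi_nonneg x)]
  have h1 : |x^2 - 1| ≤ x^2 + 1 := by
    rw [abs_le]; constructor <;> nlinarith [sq_nonneg x]
  have h0 : (0:ℝ) ≤ |g x| := abs_nonneg _
  have h2 : (0:ℝ) ≤ φ x := phi_nonneg x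
  calc |g x| * |x^2 - 1| * φ x ≤ |g x| * (x^2+1) * φ x :=
    mul_le_mul_of_nonneg_right (mul_le_mul_of_nonneg_left h1 h0) h2

lemma intOn_Ioi (hconv : ConvexOn ℝ Set.univ g) (hg' : ∀ x, HasDerivAt g (g' x) x)
    (hGvol : Integrable (fun x => |g x| * (x^2 + 1) * φ x) (volume : Measure ℝ)) :
    IntegrableOn (fun x => x * g' x * φ x) (Ioi 0) (volume : Measure ℝ) := by
  have hm := mono_g' hconv hg'
  by_cases hc : ∀ x : ℝ, 0 ≤ x → g' x < 0
  · refine Integrable.mono' ((integrable_abs_mul_phi.const_mul |g' 0|).restrict)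
      ((cont_f hconv hg').aestronglyMeasurable.restrict) ?_
    filter_upwards [ae_restrict_mem measurableSet_Ioi] with x hx
    have hx0 : (0:ℝ) ≤ x := le_of_lt hx
    have h1 : |g' x| ≤ |g' 0| := by
      have h2 := hm hx0
      have h3 := hc x hx0
      have h4 := hc 0 le_rfl
      rw [abs_of_neg h3, abs_of_neg h4]; linarith
    rw [Real.norm_eq_abs, abs_mul, abs_mul, abs_of_nonneg (phi_nonneg x)]
    calc |x| * |g' x| * φ x ≤ |x| * |g' 0| * φ x := by
          have := mul_le_mul_of_nonneg_left h1 (abs_nonneg x)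
          nlinarith [phi_nonneg x]
      _ = |g' 0| * (|x| * φ x) := by ring
  · push_neg at hc
    obtain ⟨x₀, hx₀0, hg'x₀⟩ := hc
    have hmain : IntegrableOn (fun x => x * g' x * φ x) (Ioi x₀) volume := by
      have hex : ∀ n : ℕ, ∃ b, max x₀ n < b ∧ |g b| * (b^2 + 1) * φ b ≤ 1 :=
        fun n => exists_small_right hGvol _
      choose b hb1 hb2 using hex
      have hbx : ∀ n, x₀ ≤ b n := fun n => ((le_max_left _ _).trans (hb1 n).le)
      refine integrableOn_Ioi_of_intervalIntegral_norm_bounded (b := b) (l := atTop)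
        (1 + |g x₀ * (x₀ * φ x₀)| + ∫ x, |g x| * (x^2 + 1) * φ x) x₀
        (fun i => (cont_f hconv hg').integrableOn_Ioc) ?_ ?_
      · refine tendsto_atTop_mono (fun n => ?_) tendsto_natCast_atTop_atTop
        exact ((le_max_right x₀ n).trans (hb1 n).le)
      · refine Eventually.of_forall (fun n => ?_)
        have hb0 : (0:ℝ) ≤ b n := hx₀0.trans (hbx n)
        have heq1 : ∫ x in x₀..(b n), ‖x * g' x * φ x‖ = ∫ x in x₀..(b n), x * g' x * φ x := by
          refine intervalIntegral.integral_congr (fun x hx => ?_)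
          rw [uIcc_of_le (hbx n)] at hx
          have hxx : (0:ℝ) ≤ x := hx₀0.trans hx.1
          have : (0:ℝ) ≤ g' x := hg'x₀.trans (hm hx.1)
          rw [Real.norm_eq_abs, abs_of_nonneg (mul_nonneg (mul_nonneg hxx this) (phi_nonneg x))]
        have heq2 : ∫ x in x₀..(b n), x * g' x * φ x =
            (g (b n) * (b n * φ (b n)) - g x₀ * (x₀ * φ x₀)) +
              ∫ x in x₀..(b n), g x * (x^2 - 1) * φ x := by
          rw [← ftc_ident hconv hg' x₀ (b n),
            ← intervalIntegral.integral_add ((cont_D hconv hg').intervalIntegrable _ _)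
              (show IntervalIntegrable (fun x => g x * (x^2 - 1) * φ x) volume _ _ from
                ((cont_g hg').mul (((continuous_pow 2).sub continuous_const)) |>.mul
                continuous_phi).intervalIntegrable _ _)]
          refine intervalIntegral.integral_congr (fun x _ => ?_)
          ring
        have hb3 : g (b n) * (b n * φ (b n)) ≤ 1 :=
          ((le_abs_self _).trans (abs_point_bound (b n))).trans (hb2 n)
        have hb4 : ∫ x in x₀..(b n), g x * (x^2 - 1) * φ x ≤
            ∫ x, |g x| * (x^2 + 1) * φ x := by
          have s1 : ∫ x in x₀..(b n), g x * (x^2 - 1) * φ x ≤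
              ∫ x in x₀..(b n), |g x| * (x^2 + 1) * φ x := by
            refine intervalIntegral.integral_mono_on (hbx n)
              (((cont_g hg').mul ((continuous_pow 2).sub continuous_const) |>.mul
                continuous_phi).intervalIntegrable _ _)
              ((cont_G hg').intervalIntegrable _ _) (fun x _ => ?_)
            exact (le_abs_self _).trans (abs_g_bound x)
          refine s1.trans ?_
          rw [intervalIntegral.integral_of_le (hbx n)]
          refine setIntegral_le_integral hGvol (Eventually.of_forall (fun x => ?_))
          have h2 : (0:ℝ) ≤ x^2+1 := by positivity
          exact mul_nonneg (mul_nonneg (abs_nonneg _) h2) (phi_nonneg x)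
        rw [heq1, heq2]
        linarith [neg_abs_le (g x₀ * (x₀ * φ x₀))]
    have hmid : IntegrableOn (fun x => x * g' x * φ x) (Ioc 0 x₀) volume :=
      (cont_f hconv hg').integrableOn_Ioc
    rw [← Ioc_union_Ioi_eq_Ioi hx₀0]
    exact hmid.union hmain

lemma intOn_Iio (hconv : ConvexOn ℝ Set.univ g) (hg' : ∀ x, HasDerivAt g (g' x) x)
    (hGvol : Integrable (fun x => |g x| * (x^2 + 1) * φ x) (volume : Measure ℝ)) :
    IntegrableOn (fun x => x * g' x * φ x) (Iio 0) (volume : Measure ℝ) := by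
  have hm := mono_g' hconv hg'
  by_cases hc : ∀ x : ℝ, x ≤ 0 → 0 < g' x
  · refine Integrable.mono' ((integrable_abs_mul_phi.const_mul |g' 0|).restrict)
      ((cont_f hconv hg').aestronglyMeasurable.restrict) ?_
    filter_upwards [ae_restrict_mem measurableSet_Iio] with x hx
    have hx0 : x ≤ 0 := le_of_lt hx
    have h1 : |g' x| ≤ |g' 0| := by
      have h2 := hm hx0
      have h3 := hc x hx0
      have h4 := hc 0 le_rfl
      rw [abs_of_pos h3, abs_of_pos h4]; linarith
    rw [Real.norm_eq_abs, abs_mul, abs_mul, abs_of_nonneg (phi_nonneg x)]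
    calc |x| * |g' x| * φ x ≤ |x| * |g' 0| * φ x := by
          have := mul_le_mul_of_nonneg_left h1 (abs_nonneg x)
          nlinarith [phi_nonneg x]
      _ = |g' 0| * (|x| * φ x) := by ring
  · push_neg at hc
    obtain ⟨x₀, hx₀0, hg'x₀⟩ := hc
    have hmain : IntegrableOn (fun x => x * g' x * φ x) (Iic x₀) volume := by
      have hex : ∀ n : ℕ, ∃ b, b < min x₀ (-(n:ℝ)) ∧ |g b| * (b^2 + 1) * φ b ≤ 1 :=
        fun n => exists_small_left hGvol _
      choose b hb1 hb2 using hex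
      have hbx : ∀ n, b n ≤ x₀ := fun n => ((hb1 n).le.trans (min_le_left _ _))
      refine integrableOn_Iic_of_intervalIntegral_norm_bounded (a := b) (l := atTop)
        (1 + |g x₀ * (x₀ * φ x₀)| + ∫ x, |g x| * (x^2 + 1) * φ x) x₀
        (fun i => (cont_f hconv hg').integrableOn_Ioc) ?_ ?_
      · refine tendsto_atBot_mono (fun n => ((hb1 n).le.trans (min_le_right _ _))) ?_
        exact tendsto_neg_atTop_atBot.comp tendsto_natCast_atTop_atTop
      · refine Eventually.of_forall (fun n => ?_)
        have heq1 : ∫ x in (b n)..x₀, ‖x * g' x * φ x‖ = ∫ x in (b n)..x₀, x * g' x * φ x := by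
          refine intervalIntegral.integral_congr (fun x hx => ?_)
          rw [uIcc_of_le (hbx n)] at hx
          have hxx : x ≤ 0 := hx.2.trans hx₀0
          have hgx : g' x ≤ 0 := (hm hx.2).trans hg'x₀
          rw [Real.norm_eq_abs,
            abs_of_nonneg (mul_nonneg (by nlinarith : (0:ℝ) ≤ x * g' x) (phi_nonneg x))]
        have heq2 : ∫ x in (b n)..x₀, x * g' x * φ x =
            (g x₀ * (x₀ * φ x₀) - g (b n) * (b n * φ (b n))) +
              ∫ x in (b n)..x₀, g x * (x^2 - 1) * φ x := by
          rw [← ftc_ident hconv hg' (b n) x₀,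
            ← intervalIntegral.integral_add ((cont_D hconv hg').intervalIntegrable _ _)
              (show IntervalIntegrable (fun x => g x * (x^2 - 1) * φ x) volume _ _ from
                ((cont_g hg').mul (((continuous_pow 2).sub continuous_const)) |>.mul
                continuous_phi).intervalIntegrable _ _)]
          refine intervalIntegral.integral_congr (fun x _ => ?_)
          ring
        have hb3 : -(g (b n) * (b n * φ (b n))) ≤ 1 :=
          ((neg_le_abs _).trans (abs_point_bound (b n))).trans (hb2 n)
        have hb4 : ∫ x in (b n)..x₀, g x * (x^2 - 1) * φ x ≤
            ∫ x, |g x| * (x^2 + 1) * φ x := by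
          have s1 : ∫ x in (b n)..x₀, g x * (x^2 - 1) * φ x ≤
              ∫ x in (b n)..x₀, |g x| * (x^2 + 1) * φ x := by
            refine intervalIntegral.integral_mono_on (hbx n)
              (((cont_g hg').mul ((continuous_pow 2).sub continuous_const) |>.mul
                continuous_phi).intervalIntegrable _ _)
              ((cont_G hg').intervalIntegrable _ _) (fun x _ => ?_)
            exact (le_abs_self _).trans (abs_g_bound x)
          refine s1.trans ?_
          rw [intervalIntegral.integral_of_le (hbx n)]
          refine setIntegral_le_integral hGvol (Eventually.of_forall (fun x => ?_))
          have h2 : (0:ℝ) ≤ x^2+1 := by positivity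
          exact mul_nonneg (mul_nonneg (abs_nonneg _) h2) (phi_nonneg x)
        rw [heq1, heq2]
        linarith [le_abs_self (g x₀ * (x₀ * φ x₀))]
    have hmid : IntegrableOn (fun x => x * g' x * φ x) (Ioc x₀ 0) volume :=
      (cont_f hconv hg').integrableOn_Ioc
    refine IntegrableOn.mono_set ?_ (Iio_subset_Iic_self)
    rw [← Iic_union_Ioc_eq_Iic hx₀0]
    exact hmain.union hmid

lemma int_f_vol (hconv : ConvexOn ℝ Set.univ g) (hg' : ∀ x, HasDerivAt g (g' x) x)
    (hGvol : Integrable (fun x => |g x| * (x^2 + 1) * φ x) (volume : Measure ℝ)) :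
    Integrable (fun x => x * g' x * φ x) (volume : Measure ℝ) := by
  rw [← integrableOn_univ, ← Iio_union_Ici (a := (0:ℝ))]
  refine (intOn_Iio hconv hg' hGvol).union ?_
  rw [integrableOn_Ici_iff_integrableOn_Ioi]
  exact intOn_Ioi hconv hg' hGvol

lemma int_gsq_vol (hg' : ∀ x, HasDerivAt g (g' x) x)
    (hGvol : Integrable (fun x => |g x| * (x^2 + 1) * φ x) (volume : Measure ℝ)) :
    Integrable (fun x => g x * (x^2 - 1) * φ x) (volume : Measure ℝ) := by
  refine Integrable.mono' hGvol
    (((cont_g hg').mul ((continuous_pow 2).sub continuous_const) |>.mul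
      continuous_phi).aestronglyMeasurable) (Eventually.of_forall fun x => ?_)
  rw [Real.norm_eq_abs]
  exact abs_g_bound x

lemma int_D_vol (hconv : ConvexOn ℝ Set.univ g) (hg' : ∀ x, HasDerivAt g (g' x) x)
    (hGvol : Integrable (fun x => |g x| * (x^2 + 1) * φ x) (volume : Measure ℝ)) :
    Integrable (fun x => (x * g' x - g x * (x^2 - 1)) * φ x) (volume : Measure ℝ) := by
  have := (int_f_vol hconv hg' hGvol).sub (int_gsq_vol hg' hGvol)
  refine this.congr (Eventually.of_forall fun x => ?_)
  simp only [Pi.sub_apply]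
  ring

lemma F_lim_zero_top
    (hGvol : Integrable (fun x => |g x| * (x^2 + 1) * φ x) (volume : Measure ℝ))
    {L : ℝ} (hT : Tendsto (fun x => g x * (x * φ x)) atTop (nhds L)) : L = 0 := by
  by_contra hL
  have hev : ∀ᶠ x in atTop, |L|/2 ≤ |g x * (x * φ x)| := by
    have h2 := Metric.tendsto_nhds.mp hT (|L|/2) (by positivity)
    filter_upwards [h2] with x hx
    rw [Real.dist_eq] at hx
    have := abs_sub_abs_le_abs_sub (L) (g x * (x * φ x))
    rw [abs_sub_comm] at this
    linarith
  obtain ⟨M, hM⟩ := hev.exists_forall_of_atTop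
  refine aux_not_integrable hGvol measurableSet_Ioi (Real.volume_Ioi (a := M))
    (show (0:ℝ) < |L|/2 by positivity) (fun x hx => ?_)
  exact (hM x (le_of_lt hx)).trans ((abs_point_bound x))

lemma F_lim_zero_bot
    (hGvol : Integrable (fun x => |g x| * (x^2 + 1) * φ x) (volume : Measure ℝ))
    {L : ℝ} (hT : Tendsto (fun x => g x * (x * φ x)) atBot (nhds L)) : L = 0 := by
  by_contra hL
  have hev : ∀ᶠ x in atBot, |L|/2 ≤ |g x * (x * φ x)| := by
    have h2 := Metric.tendsto_nhds.mp hT (|L|/2) (by positivity)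
    filter_upwards [h2] with x hx
    rw [Real.dist_eq] at hx
    have := abs_sub_abs_le_abs_sub (L) (g x * (x * φ x))
    rw [abs_sub_comm] at this
    linarith
  obtain ⟨M, hM⟩ := hev.exists_forall_of_atBot
  refine aux_not_integrable hGvol measurableSet_Iio (Real.volume_Iio (a := M))
    (show (0:ℝ) < |L|/2 by positivity) (fun x hx => ?_)
  exact (hM x (le_of_lt hx)).trans ((abs_point_bound x))

lemma integral_D_zero (hconv : ConvexOn ℝ Set.univ g) (hg' : ∀ x, HasDerivAt g (g' x) x)
    (hGvol : Integrable (fun x => |g x| * (x^2 + 1) * φ x) (volume : Measure ℝ)) :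
    ∫ x, (x * g' x - g x * (x^2 - 1)) * φ x ∂(volume : Measure ℝ) = 0 := by
  have hD := int_D_vol hconv hg' hGvol
  have key : ∀ b : ℝ, g b * (b * φ b) =
      g 0 * (0 * φ 0) + ∫ x in (0:ℝ)..b, (x * g' x - g x * (x^2 - 1)) * φ x := by
    intro b
    rw [ftc_ident hconv hg' 0 b]
    ring
  have hlimT : Tendsto (fun x => g x * (x * φ x)) atTop
      (nhds (g 0 * (0 * φ 0) + ∫ x in Ioi (0:ℝ), (x * g' x - g x * (x^2 - 1)) * φ x)) := by
    have h1 := MeasureTheory.intervalIntegral_tendsto_integral_Ioi 0 hD.integrableOn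
      (tendsto_id (x := atTop))
    exact ((tendsto_const_nhds.add h1).congr (fun b => (key b).symm))
  have hlimB : Tendsto (fun x => g x * (x * φ x)) atBot
      (nhds (g 0 * (0 * φ 0) - ∫ x in Iic (0:ℝ), (x * g' x - g x * (x^2 - 1)) * φ x)) := by
    have h1 := MeasureTheory.intervalIntegral_tendsto_integral_Iic 0 hD.integrableOn
      (tendsto_id (x := atBot))
    refine ((tendsto_const_nhds.sub h1).congr (fun b => ?_))
    have hsymm := intervalIntegral.integral_symm (a := 0) (b := b)
      (f := fun x => (x * g' x - g x * (x^2 - 1)) * φ x) (μ := volume)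
    simp only [id]
    rw [hsymm, key b]
    ring
  have h1 := F_lim_zero_top hGvol hlimT
  have h2 := F_lim_zero_bot hGvol hlimB
  rw [← intervalIntegral.integral_Iic_add_Ioi hD.integrableOn hD.integrableOn]
  linarith

lemma main_eq (hconv : ConvexOn ℝ Set.univ g) (hg' : ∀ x, HasDerivAt g (g' x) x)
    (hint : Integrable (fun x => |g x| * (x ^ 2 + 1)) (gaussianReal 0 1)) :
    (∫ x, x * g' x ∂(gaussianReal 0 1)) = ∫ x, g x * (x ^ 2 - 1) ∂(gaussianReal 0 1) := by
  have hGvol : Integrable (fun x => |g x| * (x^2 + 1) * φ x) (volume : Measure ℝ) :=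
    integrable_gaussian_iff.mp hint
  rw [integral_gaussian_eq, integral_gaussian_eq]
  have hsub := integral_sub (int_f_vol hconv hg' hGvol) (int_gsq_vol hg' hGvol)
  rw [show (fun a => a * g' a * φ a - g a * (a^2 - 1) * φ a)
      = fun a => (a * g' a - g a * (a^2 - 1)) * φ a from funext fun a => by ring] at hsub
  rw [integral_D_zero hconv hg' hGvol] at hsub
  linarith [hsub]

noncomputable def stj (g' : ℝ → ℝ) (hm : Monotone g') (hc : Continuous g') :
    StieltjesFunction ℝ :=
  ⟨g', hm, fun x => hc.continuousWithinAt⟩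

lemma stj_apply (hm : Monotone g') (hc : Continuous g') (x : ℝ) :
    stj g' hm hc x = g' x := rfl

lemma stj_measure_Ico (hm : Monotone g') (hc : Continuous g') (a b : ℝ) :
    (stj g' hm hc).measure (Ico a b) = ENNReal.ofReal (g' b - g' a) := by
  rw [StieltjesFunction.measure_Ico]
  have hl : ∀ y : ℝ, Function.leftLim (stj g' hm hc) y = g' y := by
    intro y
    have : ContinuousWithinAt g' (Iio y) y := hc.continuousWithinAt
    exact hm.continuousWithinAt_Iio_iff_leftLim_eq.mp this
  rw [hl, hl]

lemma int_Ioi_phi (x : ℝ) : ∫ t in Ioi x, t * φ t = φ x := by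
  have h := MeasureTheory.integral_Ioi_of_hasDerivAt_of_tendsto
    (f := fun t => -φ t) (f' := fun t => t * φ t) (a := x)
    (continuous_phi.neg.continuousWithinAt)
    (fun t _ => (hasDerivAt_phi t).neg.congr_deriv (by ring))
    (integrable_mul_phi.integrableOn)
    (by simpa using tendsto_phi_atTop.neg)
  simpa using h

lemma int_Iic_phi (x : ℝ) : ∫ t in Iic x, (-t) * φ t = φ x := by
  have h := MeasureTheory.integral_Iic_of_hasDerivAt_of_tendsto
    (f := φ) (f' := fun t => (-t) * φ t) (a := x)
    (continuous_phi.continuousWithinAt)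
    (fun t _ => by simpa [neg_mul] using (hasDerivAt_phi t))
    (integrable_mul_phi.neg.congr (Eventually.of_forall fun t => by simp [Pi.neg_apply]) |>.integrableOn)
    (tendsto_phi_atBot)
  simpa using h

lemma int_m_vol (hconv : ConvexOn ℝ Set.univ g) (hg' : ∀ x, HasDerivAt g (g' x) x)
    (hGvol : Integrable (fun x => |g x| * (x^2 + 1) * φ x) (volume : Measure ℝ)) :
    Integrable (fun t => (t * φ t) * (g' t - g' 0)) (volume : Measure ℝ) := by
  have := (int_f_vol hconv hg' hGvol).sub (integrable_mul_phi.const_mul (g' 0))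
  refine this.congr (Eventually.of_forall fun t => ?_)
  simp only [Pi.sub_apply]
  ring

lemma right_piece (hconv : ConvexOn ℝ Set.univ g) (hg' : ∀ x, HasDerivAt g (g' x) x)
    (hm : Monotone g') (hc : Continuous g') :
    ∫⁻ x in Ici 0, gaussianPDF 0 1 x ∂(stj g' hm hc).measure =
      ∫⁻ t, ENNReal.ofReal (t * φ t) * (stj g' hm hc).measure (Ico 0 t) ∂(volume : Measure ℝ) := by
  set μS := (stj g' hm hc).measure with hμS
  have hk : Measurable (fun t : ℝ => ENNReal.ofReal (t * φ t)) :=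
    (continuous_id.mul continuous_phi).measurable.ennreal_ofReal
  have step1 : ∀ x ∈ Ici (0:ℝ), gaussianPDF 0 1 x =
      ∫⁻ t, (Ioi x).indicator (fun t => ENNReal.ofReal (t * φ t)) t ∂(volume : Measure ℝ) := by
    intro x hx
    rw [lintegral_indicator measurableSet_Ioi]
    show ENNReal.ofReal (φ x) = _
    rw [← int_Ioi_phi x]
    refine ofReal_integral_eq_lintegral_ofReal (integrable_mul_phi.integrableOn) ?_
    filter_upwards [ae_restrict_mem measurableSet_Ioi] with t ht
    have : (0:ℝ) ≤ t := le_of_lt (lt_of_le_of_lt hx ht)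
    exact mul_nonneg this (phi_nonneg t)
  rw [setLIntegral_congr_fun measurableSet_Ici step1]
  have hmeasur : AEMeasurable
      (Function.uncurry (fun x t : ℝ => (Ioi x).indicator (fun t => ENNReal.ofReal (t * φ t)) t))
      ((μS.restrict (Ici 0)).prod (volume : Measure ℝ)) := by
    have heq : Function.uncurry
        (fun x t : ℝ => (Ioi x).indicator (fun t => ENNReal.ofReal (t * φ t)) t) =
        {q : ℝ × ℝ | q.1 < q.2}.indicator (fun q => ENNReal.ofReal (q.2 * φ q.2)) := by
      funext p
      by_cases h : p.1 < p.2
      · simp [Function.uncurry, Set.indicator, h]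
      · simp [Function.uncurry, Set.indicator, h]
    rw [heq]
    exact ((hk.comp measurable_snd).indicator
      (measurableSet_lt measurable_fst measurable_snd)).aemeasurable
  rw [lintegral_lintegral_swap hmeasur]
  refine lintegral_congr (fun t => ?_)
  have hind : ∀ x : ℝ, (Ioi x).indicator (fun t => ENNReal.ofReal (t * φ t)) t =
      (Iio t).indicator (fun _ => ENNReal.ofReal (t * φ t)) x := by
    intro x
    by_cases h : x < t
    · simp [Set.indicator, h]
    · simp [Set.indicator, h]
  simp_rw [hind]
  rw [lintegral_indicator_const measurableSet_Iio, Measure.restrict_apply measurableSet_Iio,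
    inter_comm, Ici_inter_Iio]

lemma left_piece (hconv : ConvexOn ℝ Set.univ g) (hg' : ∀ x, HasDerivAt g (g' x) x)
    (hm : Monotone g') (hc : Continuous g') :
    ∫⁻ x in Iio 0, gaussianPDF 0 1 x ∂(stj g' hm hc).measure =
      ∫⁻ t, ENNReal.ofReal ((-t) * φ t) * (stj g' hm hc).measure (Ico t 0) ∂(volume : Measure ℝ) := by
  set μS := (stj g' hm hc).measure with hμS
  have hk : Measurable (fun t : ℝ => ENNReal.ofReal ((-t) * φ t)) :=
    (continuous_neg.mul continuous_phi).measurable.ennreal_ofReal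
  have step1 : ∀ x ∈ Iio (0:ℝ), gaussianPDF 0 1 x =
      ∫⁻ t, (Iic x).indicator (fun t => ENNReal.ofReal ((-t) * φ t)) t ∂(volume : Measure ℝ) := by
    intro x hx
    rw [lintegral_indicator measurableSet_Iic]
    show ENNReal.ofReal (φ x) = _
    rw [← int_Iic_phi x]
    refine ofReal_integral_eq_lintegral_ofReal
      ((integrable_mul_phi.neg.congr (Eventually.of_forall fun t => by
        simp [Pi.neg_apply])).integrableOn) ?_
    filter_upwards [ae_restrict_mem measurableSet_Iic] with t ht
    have h1 : t ≤ 0 := le_trans ht (le_of_lt hx)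
    have := phi_nonneg t
    simp only [Pi.zero_apply]
    nlinarith
  rw [setLIntegral_congr_fun measurableSet_Iio step1]
  have hmeasur : AEMeasurable
      (Function.uncurry (fun x t : ℝ => (Iic x).indicator (fun t => ENNReal.ofReal ((-t) * φ t)) t))
      ((μS.restrict (Iio 0)).prod (volume : Measure ℝ)) := by
    have heq : Function.uncurry
        (fun x t : ℝ => (Iic x).indicator (fun t => ENNReal.ofReal ((-t) * φ t)) t) =
        {q : ℝ × ℝ | q.2 ≤ q.1}.indicator (fun q => ENNReal.ofReal ((-q.2) * φ q.2)) := by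
      funext p
      by_cases h : p.2 ≤ p.1
      · simp [Function.uncurry, Set.indicator, h]
      · simp [Function.uncurry, Set.indicator, h]
    rw [heq]
    exact ((hk.comp measurable_snd).indicator
      (measurableSet_le measurable_snd measurable_fst)).aemeasurable
  rw [lintegral_lintegral_swap hmeasur]
  refine lintegral_congr (fun t => ?_)
  have hind : ∀ x : ℝ, (Iic x).indicator (fun t => ENNReal.ofReal ((-t) * φ t)) t =
      (Ici t).indicator (fun _ => ENNReal.ofReal ((-t) * φ t)) x := by
    intro x
    by_cases h : t ≤ x
    · simp [Set.indicator, h]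
    · simp [Set.indicator, h]
  simp_rw [hind]
  rw [lintegral_indicator_const measurableSet_Ici, Measure.restrict_apply measurableSet_Ici,
    Ici_inter_Iio]

lemma right_piece_val (hconv : ConvexOn ℝ Set.univ g) (hg' : ∀ x, HasDerivAt g (g' x) x)
    (hGvol : Integrable (fun x => |g x| * (x^2 + 1) * φ x) (volume : Measure ℝ))
    (hm : Monotone g') (hc : Continuous g') :
    ∫⁻ t, ENNReal.ofReal (t * φ t) * (stj g' hm hc).measure (Ico 0 t) ∂(volume : Measure ℝ)
      = ENNReal.ofReal (∫ t in Ioi 0, (t * φ t) * (g' t - g' 0)) := by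
  set μS := (stj g' hm hc).measure with hμS
  have hsplit := lintegral_add_compl (μ := (volume : Measure ℝ))
    (fun t => ENNReal.ofReal (t * φ t) * μS (Ico 0 t)) (measurableSet_Ioi (a := (0:ℝ)))
  rw [compl_Ioi] at hsplit
  have hzero : ∫⁻ t in Iic (0:ℝ), ENNReal.ofReal (t * φ t) * μS (Ico 0 t) ∂volume = 0 := by
    rw [setLIntegral_congr_fun measurableSet_Iic
      (fun t (ht : t ∈ Iic (0:ℝ)) => ?_), lintegral_zero]
    have h1 : t * φ t ≤ 0 := mul_nonpos_iff.mpr (Or.inr ⟨ht, phi_nonneg t⟩)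
    rw [ENNReal.ofReal_of_nonpos h1, zero_mul]
  rw [← hsplit, hzero, add_zero]
  rw [setLIntegral_congr_fun measurableSet_Ioi
    (fun t (ht : t ∈ Ioi (0:ℝ)) => ?_)]
  · refine (ofReal_integral_eq_lintegral_ofReal ((int_m_vol hconv hg' hGvol).integrableOn) ?_).symm
    filter_upwards [ae_restrict_mem measurableSet_Ioi] with t ht
    have h0 : (0:ℝ) ≤ t := le_of_lt ht
    exact mul_nonneg (mul_nonneg h0 (phi_nonneg t)) (sub_nonneg.mpr (hm h0))
  · rw [hμS, stj_measure_Ico, ← ENNReal.ofReal_mul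
      (mul_nonneg (le_of_lt ht) (phi_nonneg t))]

lemma left_piece_val (hconv : ConvexOn ℝ Set.univ g) (hg' : ∀ x, HasDerivAt g (g' x) x)
    (hGvol : Integrable (fun x => |g x| * (x^2 + 1) * φ x) (volume : Measure ℝ))
    (hm : Monotone g') (hc : Continuous g') :
    ∫⁻ t, ENNReal.ofReal ((-t) * φ t) * (stj g' hm hc).measure (Ico t 0) ∂(volume : Measure ℝ)
      = ENNReal.ofReal (∫ t in Iio 0, (t * φ t) * (g' t - g' 0)) := by
  set μS := (stj g' hm hc).measure with hμS
  have hsplit := lintegral_add_compl (μ := (volume : Measure ℝ))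
    (fun t => ENNReal.ofReal ((-t) * φ t) * μS (Ico t 0)) (measurableSet_Iio (a := (0:ℝ)))
  rw [compl_Iio] at hsplit
  have hzero : ∫⁻ t in Ici (0:ℝ), ENNReal.ofReal ((-t) * φ t) * μS (Ico t 0) ∂volume = 0 := by
    rw [setLIntegral_congr_fun measurableSet_Ici
      (fun t (ht : t ∈ Ici (0:ℝ)) => ?_), lintegral_zero]
    have h1 : (-t) * φ t ≤ 0 := mul_nonpos_iff.mpr (Or.inr ⟨neg_nonpos.mpr ht, phi_nonneg t⟩)
    rw [ENNReal.ofReal_of_nonpos h1, zero_mul]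
  rw [← hsplit, hzero, add_zero]
  rw [setLIntegral_congr_fun measurableSet_Iio
    (fun t (ht : t ∈ Iio (0:ℝ)) => ?_)]
  · refine (ofReal_integral_eq_lintegral_ofReal ((int_m_vol hconv hg' hGvol).integrableOn) ?_).symm
    filter_upwards [ae_restrict_mem measurableSet_Iio] with t ht
    have h0 : t ≤ 0 := le_of_lt ht
    have h1 := sub_nonpos.mpr (hm h0)
    have h2 : t * φ t ≤ 0 := mul_nonpos_iff.mpr (Or.inr ⟨h0, phi_nonneg t⟩)
    simp only [Pi.zero_apply]
    nlinarith [mul_nonneg (neg_nonneg.mpr h2) (neg_nonneg.mpr h1)]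
  · rw [hμS, stj_measure_Ico, ← ENNReal.ofReal_mul
      (mul_nonneg (neg_nonneg.mpr (le_of_lt ht)) (phi_nonneg t))]
    congr 1
    ring

lemma int_mul_phi_zero : ∫ t, t * φ t ∂(volume : Measure ℝ) = 0 := by
  have hsplit := intervalIntegral.integral_Iic_add_Ioi (b := (0:ℝ))
    (f := fun t => t * φ t) (μ := volume)
    integrable_mul_phi.integrableOn integrable_mul_phi.integrableOn
  have h1 : ∫ t in Ioi (0:ℝ), t * φ t = φ 0 := int_Ioi_phi 0
  have h2 : ∫ t in Iic (0:ℝ), t * φ t = -φ 0 := by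
    have h3 := int_Iic_phi 0
    have h4 : ∫ t in Iic (0:ℝ), (-t) * φ t = -∫ t in Iic (0:ℝ), t * φ t := by
      rw [← integral_neg]
      refine setIntegral_congr_fun measurableSet_Iic (fun t _ => ?_)
      ring
    rw [h4] at h3
    linarith
  linarith [hsplit]

lemma m_sum_eq (hconv : ConvexOn ℝ Set.univ g) (hg' : ∀ x, HasDerivAt g (g' x) x)
    (hGvol : Integrable (fun x => |g x| * (x^2 + 1) * φ x) (volume : Measure ℝ)) :
    (∫ t in Ioi 0, (t * φ t) * (g' t - g' 0)) + (∫ t in Iio 0, (t * φ t) * (g' t - g' 0))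
      = ∫ x, x * g' x ∂(gaussianReal 0 1) := by
  have hm_int := int_m_vol hconv hg' hGvol
  have hIci : ∫ t in Ici (0:ℝ), (t * φ t) * (g' t - g' 0)
      = ∫ t in Ioi (0:ℝ), (t * φ t) * (g' t - g' 0) := integral_Ici_eq_integral_Ioi
  have hsplit := intervalIntegral.integral_Iio_add_Ici (b := (0:ℝ))
    (f := fun t => (t * φ t) * (g' t - g' 0)) (μ := volume)
    hm_int.integrableOn hm_int.integrableOn
  have htot : ∫ t, (t * φ t) * (g' t - g' 0) ∂(volume : Measure ℝ)
      = ∫ x, x * g' x ∂(gaussianReal 0 1) := by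
    rw [integral_gaussian_eq]
    have hsub := integral_sub (int_f_vol hconv hg' hGvol)
      (integrable_mul_phi.const_mul (g' 0))
    have hcongr : ∫ t, (t * φ t) * (g' t - g' 0) ∂(volume : Measure ℝ)
        = ∫ t, (t * g' t * φ t - g' 0 * (t * φ t)) ∂(volume : Measure ℝ) := by
      refine integral_congr_ae (Eventually.of_forall fun t => ?_)
      ring
    rw [hcongr, hsub, integral_const_mul, int_mul_phi_zero]
    ring
  rw [← hIci, ← htot]
  linarith [hsplit]

lemma part1_main (hconv : ConvexOn ℝ Set.univ g) (hg' : ∀ x, HasDerivAt g (g' x) x)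
    {h : ℝ → ℝ} (hmeas : Measurable h)
    (hderiv : ∀ᵐ x ∂(volume : Measure ℝ), HasDerivAt g' (h x) x)
    (hGvol : Integrable (fun x => |g x| * (x^2 + 1) * φ x) (volume : Measure ℝ)) :
    (∫⁻ x, ENNReal.ofReal (h x) ∂gaussianReal 0 1) ≤
      ENNReal.ofReal (∫ x, x * g' x ∂gaussianReal 0 1) := by
  have hm := mono_g' hconv hg'
  have hc := cont_g' hconv hg'
  set μS := (stj g' hm hc).measure with hμS
  have hA : ∫⁻ x, ENNReal.ofReal (h x) ∂(gaussianReal 0 1)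
      = ∫⁻ x, gaussianPDF 0 1 x * ENNReal.ofReal (h x) ∂(volume : Measure ℝ) := by
    rw [gaussianReal_of_var_ne_zero 0 one_ne_zero,
      lintegral_withDensity_eq_lintegral_mul _ (measurable_gaussianPDF 0 1)
        (hmeas.ennreal_ofReal)]
    rfl
  have hB : ∫⁻ x, gaussianPDF 0 1 x * ENNReal.ofReal (h x) ∂(volume : Measure ℝ) ≤
      ∫⁻ x, gaussianPDF 0 1 x * μS.rnDeriv volume x ∂(volume : Measure ℝ) := by
    refine lintegral_mono_ae ?_
    filter_upwards [hderiv, (stj g' hm hc).ae_hasDerivAt,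
      Measure.rnDeriv_lt_top μS volume] with x h1 h2 h3
    have hhx : h x = (μS.rnDeriv volume x).toReal := h1.unique h2
    rw [hhx, ENNReal.ofReal_toReal h3.ne]
  have hC : ∫⁻ x, gaussianPDF 0 1 x * μS.rnDeriv volume x ∂(volume : Measure ℝ) ≤
      ∫⁻ x, gaussianPDF 0 1 x ∂μS := by
    have h1 : ∫⁻ x, gaussianPDF 0 1 x * μS.rnDeriv volume x ∂(volume : Measure ℝ)
        = ∫⁻ x, gaussianPDF 0 1 x ∂(volume.withDensity (μS.rnDeriv volume)) := by
      rw [lintegral_withDensity_eq_lintegral_mul _ (Measure.measurable_rnDeriv _ _)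
        (measurable_gaussianPDF 0 1)]
      exact lintegral_congr fun x => (mul_comm _ _)
    rw [h1]
    exact lintegral_mono' (Measure.withDensity_rnDeriv_le _ _) le_rfl
  have hE : ∫⁻ x, gaussianPDF 0 1 x ∂μS =
      (∫⁻ x in Ici 0, gaussianPDF 0 1 x ∂μS) + ∫⁻ x in Iio 0, gaussianPDF 0 1 x ∂μS := by
    rw [← lintegral_add_compl (μ := μS) (gaussianPDF 0 1) (measurableSet_Ici (a := (0:ℝ))),
      compl_Ici]
  have hR := (right_piece hconv hg' hm hc).trans (right_piece_val hconv hg' hGvol hm hc)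
  have hL := (left_piece hconv hg' hm hc).trans (left_piece_val hconv hg' hGvol hm hc)
  have hnn1 : 0 ≤ ∫ t in Ioi 0, (t * φ t) * (g' t - g' 0) := by
    refine setIntegral_nonneg measurableSet_Ioi (fun t ht => ?_)
    have h0 : (0:ℝ) ≤ t := le_of_lt ht
    exact mul_nonneg (mul_nonneg h0 (phi_nonneg t)) (sub_nonneg.mpr (hm h0))
  have hnn2 : 0 ≤ ∫ t in Iio 0, (t * φ t) * (g' t - g' 0) := by
    refine setIntegral_nonneg measurableSet_Iio (fun t ht => ?_)
    have h0 : t ≤ 0 := le_of_lt ht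
    have h1 := sub_nonpos.mpr (hm h0)
    have h2 : t * φ t ≤ 0 := mul_nonpos_iff.mpr (Or.inr ⟨h0, phi_nonneg t⟩)
    nlinarith [mul_nonneg (neg_nonneg.mpr h2) (neg_nonneg.mpr h1)]
  calc ∫⁻ x, ENNReal.ofReal (h x) ∂(gaussianReal 0 1)
      ≤ ∫⁻ x, gaussianPDF 0 1 x ∂μS := by rw [hA]; exact hB.trans hC
    _ = ENNReal.ofReal (∫ t in Ioi 0, (t * φ t) * (g' t - g' 0))
        + ENNReal.ofReal (∫ t in Iio 0, (t * φ t) * (g' t - g' 0)) := by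
        rw [hE, hR, hL]
    _ = ENNReal.ofReal ((∫ t in Ioi 0, (t * φ t) * (g' t - g' 0))
        + (∫ t in Iio 0, (t * φ t) * (g' t - g' 0))) := (ENNReal.ofReal_add hnn1 hnn2).symm
    _ = ENNReal.ofReal (∫ x, x * g' x ∂(gaussianReal 0 1)) := by
        rw [m_sum_eq hconv hg' hGvol]

/-- Second-order Stein's lemma: if `g : ℝ → ℝ` is convex and everywhere differentiable
with derivative `g'`, `X ~ N(0,1)`, `E[|g(X)|(X²+1)] < ∞`, and `h` is a measurable
a.e. derivative of `g'`, then `E[h(X)] ≤ E[X g'(X)] = E[g(X)(X²−1)]`, the first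
expectation being well-defined in `[0,∞]`. -/
theorem stmt_10 (g g' h : ℝ → ℝ)
    (hconv : ConvexOn ℝ Set.univ g)
    (hg' : ∀ x, HasDerivAt g (g' x) x)
    (hmeas : Measurable h)
    (hderiv : ∀ᵐ x ∂(volume : Measure ℝ), HasDerivAt g' (h x) x)
    (hint : Integrable (fun x => |g x| * (x ^ 2 + 1)) (gaussianReal 0 1)) :
    ((∫⁻ x, ENNReal.ofReal (h x) ∂gaussianReal 0 1) ≤
        ENNReal.ofReal (∫ x, x * g' x ∂gaussianReal 0 1)) ∧
      (∫ x, x * g' x ∂gaussianReal 0 1) = ∫ x, g x * (x ^ 2 - 1) ∂gaussianReal 0 1 := by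
  have hGvol : Integrable (fun x => |g x| * (x^2 + 1) * φ x) (volume : Measure ℝ) :=
    integrable_gaussian_iff.mp hint
  exact ⟨part1_main hconv hg' hmeas hderiv hGvol, main_eq hconv hg' hint⟩
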